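/- There exists a universal constant c > 0 such that for every connected hypergraph H on n ≥ 2 vertices, the radio cover time of the simple random walk on H satisfies C̃ ≤ c · h̃_max · log n, where h̃_max is the maximum radio hitting time over all ordered pairs of vertices. -/

import Mathlib

open scoped ENNReal Classical
open Finset

/-- A hypergraph: a finite nonempty family of nonempty hyperedges over a finite vertex set. -/
structure Hypergraph' (V : Type) [Fintype V] [DecidableEq V] where
  edges : Finset (Finset V)
  edges_nonempty : edges.Nonempty
  mem_nonempty : ∀ e ∈ edges, e.Nonempty

namespace Hypergraph'

variable {V : Type} [Fintype V] [DecidableEq V]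

/-- The degree `d(v)` of a vertex: the number of hyperedges containing it. -/
def degV (H : Hypergraph' V) (v : V) : ℕ := (H.edges.filter (fun e => v ∈ e)).card

/-- The rank of a hypergraph: the maximum cardinality of a hyperedge. -/
def rank (H : Hypergraph' V) : ℕ := H.edges.sup Finset.card

/-- Connectivity: every vertex lies in some hyperedge, and any two vertices are joined
by a hyperpath (consecutive vertices share a hyperedge). -/
def Connected (H : Hypergraph' V) : Prop :=
  (∀ v : V, ∃ e ∈ H.edges, v ∈ e) ∧
    ∀ u v : V, Relation.ReflTransGen (fun a b => ∃ e ∈ H.edges, a ∈ e ∧ b ∈ e) u v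

/-- One step of the simple random walk: from vertex `v`, the probability of choosing
hyperedge `p.1` (uniform among the edges containing `v`) and then vertex `p.2`
(uniform inside `p.1`). -/
noncomputable def stepProb (H : Hypergraph' V) (v : V) (p : Finset V × V) : ℝ≥0∞ :=
  if p.1 ∈ H.edges ∧ v ∈ p.1 ∧ p.2 ∈ p.1 then
    ((H.degV v : ℝ≥0∞) * (p.1.card : ℝ≥0∞))⁻¹ else 0

/-- The vertex visited at time `s` along a trajectory `w` (a list of (edge, next vertex)
pairs) started at `v`; `vAt v w 0 = v`. -/
def vAt (v : V) {t : ℕ} (w : Fin t → Finset V × V) : ℕ → V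
  | 0 => v
  | s + 1 => if h : s < t then (w ⟨s, h⟩).2 else v

/-- Probability of a finite trajectory of the simple random walk started at `v`. -/
noncomputable def trajProb (H : Hypergraph' V) (v : V) {t : ℕ}
    (w : Fin t → Finset V × V) : ℝ≥0∞ :=
  ∏ s : Fin t, H.stepProb (vAt v w s) (w s)

/-- Probability that the length-`t` trajectory of the walk started at `v` satisfies `A`. -/
noncomputable def pr (H : Hypergraph' V) (v : V) (t : ℕ)
    (A : (Fin t → Finset V × V) → Prop) : ℝ≥0∞ :=
  ∑ w : Fin t → Finset V × V, if A w then H.trajProb v w else 0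

/-- Expected cover time from `v`: `E[max_u T_v^u] = ∑_t Pr[some vertex unvisited by time t]`. -/
noncomputable def coverFrom (H : Hypergraph' V) (v : V) : ℝ≥0∞ :=
  ∑' t : ℕ, H.pr v t (fun w => ∃ u : V, ∀ s : ℕ, s ≤ t → vAt v w s ≠ u)

/-- The cover time `C` of the hypergraph. -/
noncomputable def coverTime (H : Hypergraph' V) : ℝ≥0∞ := ⨆ v : V, H.coverFrom v

/-- Expected radio cover time from `v`: `u` has heard the walk by time `t` iff `u = X(0)`
or `u ∈ e(s)` for some `s < t`. -/
noncomputable def radioCoverFrom (H : Hypergraph' V) (v : V) : ℝ≥0∞ :=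
  ∑' t : ℕ, H.pr v t (fun w => ∃ u : V, u ≠ v ∧ ∀ s : Fin t, u ∉ (w s).1)

/-- The radio cover time `C̃` of the hypergraph. -/
noncomputable def radioCoverTime (H : Hypergraph' V) : ℝ≥0∞ := ⨆ v : V, H.radioCoverFrom v

/-- The hitting time `h(v,u) = E[inf{t : X(t) = u}]`. -/
noncomputable def hitting (H : Hypergraph' V) (v u : V) : ℝ≥0∞ :=
  ∑' t : ℕ, H.pr v t (fun w => ∀ s : ℕ, s ≤ t → vAt v w s ≠ u)

/-- The radio hitting time `h̃(v,u)`: expected first time by which `u` has heard the walk. -/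
noncomputable def radioHitting (H : Hypergraph' V) (v u : V) : ℝ≥0∞ :=
  ∑' t : ℕ, H.pr v t (fun w => u ≠ v ∧ ∀ s : Fin t, u ∉ (w s).1)

/-- The maximum hitting time `h_max`. -/
noncomputable def maxHitting (H : Hypergraph' V) : ℝ≥0∞ := ⨆ v : V, ⨆ u : V, H.hitting v u

/-- The maximum radio hitting time `h̃_max`. -/
noncomputable def maxRadioHitting (H : Hypergraph' V) : ℝ≥0∞ :=
  ⨆ v : V, ⨆ u : V, H.radioHitting v u

end Hypergraph'

namespace Hypergraph'

set_option linter.unusedSectionVars false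

variable {V : Type} [Fintype V] [DecidableEq V]

lemma sum_stepProb (H : Hypergraph' V) (v : V) (hv : 0 < H.degV v) :
    ∑ p : Finset V × V, H.stepProb v p = 1 := by
  rw [Fintype.sum_prod_type]
  have hstep : ∀ e : Finset V, (∑ x : V, H.stepProb v (e, x)) =
      if e ∈ H.edges.filter (fun e => v ∈ e) then ((H.degV v : ℝ≥0∞))⁻¹ else 0 := by
    intro e
    by_cases he : e ∈ H.edges ∧ v ∈ e
    · have hcard : (e.card : ℝ≥0∞) ≠ 0 := by
        have := H.mem_nonempty e he.1
        simp [Finset.card_eq_zero, this.ne_empty]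
      simp only [stepProb, he, true_and, Finset.mem_filter, and_true, if_pos, Finset.mem_univ]
      rw [Finset.sum_ite_mem, Finset.univ_inter, Finset.sum_const, nsmul_eq_mul]
      rw [ENNReal.mul_inv (Or.inr (by simp)) (Or.inl (by simp))]
      rw [← mul_assoc, mul_comm (e.card : ℝ≥0∞) _, mul_assoc,
        ENNReal.mul_inv_cancel hcard (by simp), mul_one]
    · rw [if_neg (by simp [Finset.mem_filter]; tauto)]
      have : ∀ x : V, (if e ∈ H.edges ∧ v ∈ e ∧ x ∈ e then ((H.degV v : ℝ≥0∞) * e.card)⁻¹ else 0) = 0 := by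
        intro x; rw [if_neg]; tauto
      simp [stepProb, this]
  rw [Finset.sum_congr rfl (fun e _ => hstep e)]
  rw [Finset.sum_ite_mem, Finset.univ_inter, Finset.sum_const, nsmul_eq_mul]
  exact ENNReal.mul_inv_cancel (by simpa [degV] using hv.ne') (by simp)

lemma vAt_zero (v : V) {t : ℕ} (w : Fin t → Finset V × V) : vAt v w 0 = v := rfl

lemma vAt_succ (v : V) {t : ℕ} (w : Fin t → Finset V × V) (s : ℕ) :
    vAt v w (s + 1) = if h : s < t then (w ⟨s, h⟩).2 else v := rfl

lemma vAt_cons (v : V) {t : ℕ} (p : Finset V × V) (w : Fin t → Finset V × V)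
    (s : ℕ) (hs : s < t) :
    vAt v (Fin.cons p w) (s + 1) = vAt p.2 w s := by
  cases s with
  | zero => simp [vAt_succ, vAt_zero, Nat.lt_succ_of_lt hs]
  | succ r =>
      have hr : r < t := Nat.lt_of_succ_lt hs
      rw [vAt_succ, vAt_succ, dif_pos (Nat.lt_succ_of_lt hs), dif_pos hr]
      have : (⟨r + 1, Nat.lt_succ_of_lt hs⟩ : Fin (t + 1)) = (⟨r, hr⟩ : Fin t).succ := rfl
      rw [this, Fin.cons_succ]

lemma vAt_snoc (v : V) {t : ℕ} (w : Fin t → Finset V × V) (p : Finset V × V)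
    (s : ℕ) (hs : s ≤ t) :
    vAt v (Fin.snoc w p) s = vAt v w s := by
  cases s with
  | zero => rfl
  | succ r =>
      have hr : r < t := hs
      rw [vAt_succ, vAt_succ, dif_pos (Nat.lt_succ_of_lt hr), dif_pos hr]
      have : (⟨r, Nat.lt_succ_of_lt hr⟩ : Fin (t + 1)) = (⟨r, hr⟩ : Fin t).castSucc := rfl
      rw [this, Fin.snoc_castSucc]

lemma traj_cons (H : Hypergraph' V) (v : V) {t : ℕ} (p : Finset V × V)
    (w : Fin t → Finset V × V) :
    H.trajProb v (Fin.cons p w) = H.stepProb v p * H.trajProb p.2 w := by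
  unfold trajProb
  rw [Fin.prod_univ_succ]
  congr 1
  apply Finset.prod_congr rfl
  intro s _
  have h1 : vAt v (Fin.cons p w) ((s.succ : Fin (t+1)) : ℕ) = vAt p.2 w (s : ℕ) := by
    simpa using vAt_cons v p w s s.isLt
  rw [h1, Fin.cons_succ]

lemma traj_snoc (H : Hypergraph' V) (v : V) {t : ℕ} (w : Fin t → Finset V × V)
    (p : Finset V × V) :
    H.trajProb v (Fin.snoc w p) = H.trajProb v w * H.stepProb (vAt v w t) p := by
  unfold trajProb
  rw [Fin.prod_univ_castSucc]
  congr 1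
  · apply Finset.prod_congr rfl
    intro s _
    rw [Fin.snoc_castSucc]
    congr 1
    exact vAt_snoc v w p s (le_of_lt s.isLt)
  · rw [Fin.snoc_last]
    congr 1
    exact vAt_snoc v w p t le_rfl

lemma pr_mono (H : Hypergraph' V) (v : V) (t : ℕ)
    {A B : (Fin t → Finset V × V) → Prop} (h : ∀ w, A w → B w) :
    H.pr v t A ≤ H.pr v t B := by
  apply Finset.sum_le_sum
  intro w _
  by_cases hA : A w
  · rw [if_pos hA, if_pos (h w hA)]
  · simp [hA]

lemma pr_congr (H : Hypergraph' V) (v : V) (t : ℕ)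
    {A B : (Fin t → Finset V × V) → Prop} (h : ∀ w, A w ↔ B w) :
    H.pr v t A = H.pr v t B :=
  le_antisymm (H.pr_mono v t fun w => (h w).1) (H.pr_mono v t fun w => (h w).2)

lemma pr_zero (H : Hypergraph' V) (v : V) (A : (Fin 0 → Finset V × V) → Prop) :
    H.pr v 0 A = if A finZeroElim then 1 else 0 := by
  unfold pr
  rw [Finset.sum_eq_single_of_mem finZeroElim (Finset.mem_univ _)]
  · have : H.trajProb v finZeroElim = 1 := by simp [trajProb]
    rw [this]
  · intro w _ hw
    exact absurd (funext fun s => s.elim0) hw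

lemma pr_succ (H : Hypergraph' V) (v : V) (t : ℕ)
    (A : (Fin (t + 1) → Finset V × V) → Prop) :
    H.pr v (t + 1) A =
      ∑ p : Finset V × V, H.stepProb v p * H.pr p.2 t (fun w => A (Fin.cons p w)) := by
  unfold pr
  rw [← Equiv.sum_comp (Fin.consEquiv (fun _ => Finset V × V))
    (fun w => if A w then H.trajProb v w else 0)]
  rw [Fintype.sum_prod_type]
  apply Finset.sum_congr rfl
  intro p _
  rw [Finset.mul_sum]
  apply Finset.sum_congr rfl
  intro w _
  have : (Fin.consEquiv (fun _ => Finset V × V)) (p, w) = Fin.cons p w := rfl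
  rw [this, traj_cons]
  by_cases hA : A (Fin.cons p w) <;> simp [hA]

lemma pr_snoc (H : Hypergraph' V) (hd : ∀ x : V, 0 < H.degV x) (v : V) (t : ℕ)
    (A : (Fin t → Finset V × V) → Prop) :
    H.pr v (t + 1) (fun w => A (Fin.init w)) = H.pr v t A := by
  unfold pr
  rw [← Equiv.sum_comp (Fin.snocEquiv (fun _ => Finset V × V))
    (fun w => if A (Fin.init w) then H.trajProb v w else 0)]
  rw [Fintype.sum_prod_type]
  rw [Finset.sum_comm]
  apply Finset.sum_congr rfl
  intro w _
  have key : ∀ p : Finset V × V,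
      (if A (Fin.init ((Fin.snocEquiv (fun _ => Finset V × V)) (p, w))) then
        H.trajProb v ((Fin.snocEquiv (fun _ => Finset V × V)) (p, w)) else 0) =
      (if A w then H.trajProb v w else 0) * H.stepProb (vAt v w t) p := by
    intro p
    have h1 : (Fin.snocEquiv (fun _ => Finset V × V)) (p, w) = Fin.snoc w p := rfl
    rw [h1, Fin.init_snoc, traj_snoc]
    by_cases hA : A w <;> simp [hA]
  rw [Finset.sum_congr rfl (fun p _ => key p), ← Finset.mul_sum,
    H.sum_stepProb _ (hd _), mul_one]

lemma pr_true (H : Hypergraph' V) (hd : ∀ x : V, 0 < H.degV x) (v : V) (t : ℕ) :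
    H.pr v t (fun _ => True) = 1 := by
  induction t generalizing v with
  | zero => simp [pr_zero]
  | succ t ih =>
      have := H.pr_snoc hd v t (fun _ => True)
      simpa [ih] using this

lemma pr_le_one (H : Hypergraph' V) (hd : ∀ x : V, 0 < H.degV x) (v : V) (t : ℕ)
    (A : (Fin t → Finset V × V) → Prop) : H.pr v t A ≤ 1 := by
  rw [← H.pr_true hd v t]
  exact H.pr_mono v t fun w _ => trivial

/-- Probability that `u` has not heard the walk from `x` in the first `t` steps. -/
noncomputable def tailP (H : Hypergraph' V) (u x : V) (t : ℕ) : ℝ≥0∞ :=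
  H.pr x t (fun w => ∀ s : Fin t, u ∉ (w s).1)

lemma tailP_zero (H : Hypergraph' V) (u x : V) : H.tailP u x 0 = 1 := by
  rw [tailP, pr_zero, if_pos (fun s => s.elim0)]

lemma tailP_le_one (H : Hypergraph' V) (hd : ∀ x : V, 0 < H.degV x) (u x : V) (t : ℕ) :
    H.tailP u x t ≤ 1 := H.pr_le_one hd x t _

lemma tailP_succ_le (H : Hypergraph' V) (hd : ∀ x : V, 0 < H.degV x) (u x : V) (t : ℕ) :
    H.tailP u x (t + 1) ≤ H.tailP u x t := by
  calc H.tailP u x (t + 1)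
      ≤ H.pr x (t + 1) (fun w => ∀ s : Fin t, u ∉ (Fin.init w s).1) := by
        apply H.pr_mono
        intro w hw s
        exact hw s.castSucc
    _ = H.tailP u x t := by rw [tailP]; exact H.pr_snoc hd x t (fun w => ∀ s : Fin t, u ∉ (w s).1)

lemma tailP_antitone (H : Hypergraph' V) (hd : ∀ x : V, 0 < H.degV x) (u x : V)
    {s t : ℕ} (hst : s ≤ t) : H.tailP u x t ≤ H.tailP u x s := by
  induction t with
  | zero => rw [Nat.le_zero.mp hst]
  | succ t ih =>
      rcases Nat.lt_or_ge s (t + 1) with h | h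
      · exact le_trans (H.tailP_succ_le hd u x t) (ih (Nat.lt_succ_iff.mp h))
      · rw [le_antisymm hst h]

lemma tailP_succ_eq (H : Hypergraph' V) (u x : V) (t : ℕ) :
    H.tailP u x (t + 1) =
      ∑ p : Finset V × V, H.stepProb x p *
        (if u ∉ p.1 then H.tailP u p.2 t else 0) := by
  rw [tailP, pr_succ]
  apply Finset.sum_congr rfl
  intro p _
  congr 1
  have : ∀ w : Fin t → Finset V × V,
      (∀ s : Fin (t + 1), u ∉ ((Fin.cons p w : Fin (t + 1) → Finset V × V) s).1) ↔
        (u ∉ p.1 ∧ ∀ s : Fin t, u ∉ (w s).1) := by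
    intro w
    constructor
    · intro h
      exact ⟨by simpa using h 0, fun s => by simpa using h s.succ⟩
    · rintro ⟨h0, h1⟩ s
      refine Fin.cases ?_ ?_ s
      · simpa using h0
      · intro i; simpa using h1 i
  rw [H.pr_congr _ _ this]
  by_cases hu : u ∉ p.1
  · rw [if_pos hu]
    rw [tailP]
    apply H.pr_congr
    intro w
    simp [hu]
  · rw [if_neg hu]
    unfold pr
    apply Finset.sum_eq_zero
    intro w _
    rw [if_neg (by tauto)]

/-- If the step probability is nonzero then the new vertex lies in the chosen edge. -/
lemma stepProb_ne_zero (H : Hypergraph' V) {x : V} {p : Finset V × V}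
    (h : H.stepProb x p ≠ 0) : p.2 ∈ p.1 := by
  by_contra hc
  apply h
  rw [stepProb, if_neg (by tauto)]

lemma tailP_iter (H : Hypergraph' V) {u : V} {b : ℕ} {M : ℝ≥0∞}
    (hM : ∀ x : V, x ≠ u → H.tailP u x b ≤ M) :
    ∀ (a : ℕ) (v : V), H.tailP u v (b + a + 1) ≤ M * H.tailP u v (a + 1) := by
  intro a
  induction a with
  | zero =>
      intro v
      rw [show b + 0 + 1 = b + 1 from rfl, tailP_succ_eq, tailP_succ_eq]
      rw [Finset.mul_sum]
      apply Finset.sum_le_sum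
      intro p _
      by_cases hs : H.stepProb v p = 0
      · simp [hs]
      by_cases hu : u ∉ p.1
      · rw [if_pos hu, if_pos hu, tailP_zero, mul_one, mul_comm M (H.stepProb v p)]
        exact mul_le_mul_right (hM p.2 (fun h => hu (h ▸ H.stepProb_ne_zero hs))) _
      · simp [hu]
  | succ a ih =>
      intro v
      rw [show b + (a + 1) + 1 = (b + a + 1) + 1 by ring, tailP_succ_eq,
        tailP_succ_eq, Finset.mul_sum]
      apply Finset.sum_le_sum
      intro p _
      by_cases hu : u ∉ p.1
      · rw [if_pos hu, if_pos hu, ← mul_assoc, mul_comm M (H.stepProb v p), mul_assoc]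
        exact mul_le_mul_right (ih p.2) _
      · simp [hu]

lemma tailP_pow (H : Hypergraph' V) (hd : ∀ x : V, 0 < H.degV x) {u : V} {T : ℕ}
    (hT : ∀ x : V, x ≠ u → H.tailP u x T ≤ 2⁻¹) :
    ∀ (k : ℕ) (v : V), H.tailP u v (k * T + 1) ≤ 2⁻¹ ^ k := by
  intro k
  induction k with
  | zero => intro v; simpa using H.tailP_le_one hd u v 1
  | succ k ih =>
      intro v
      have h1 : (k + 1) * T + 1 = T + k * T + 1 := by ring
      calc H.tailP u v ((k + 1) * T + 1) = H.tailP u v (T + k * T + 1) := by rw [h1]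
        _ ≤ 2⁻¹ * H.tailP u v (k * T + 1) := by
            have := H.tailP_iter hT (k * T) v
            simpa using this
        _ ≤ 2⁻¹ * 2⁻¹ ^ k := mul_le_mul_right (ih v) _
        _ = 2⁻¹ ^ (k + 1) := (pow_succ' _ _).symm

lemma tailP_decay (H : Hypergraph' V) (hd : ∀ x : V, 0 < H.degV x) {u : V} {T : ℕ}
    (hT1 : 1 ≤ T) (hT : ∀ x : V, x ≠ u → H.tailP u x T ≤ 2⁻¹) (t : ℕ) (v : V) :
    H.tailP u v t ≤ 2 * 2⁻¹ ^ (t / T) := by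
  rcases Nat.eq_zero_or_pos (t / T) with h0 | h0
  · rw [h0]
    calc H.tailP u v t ≤ 1 := H.tailP_le_one hd u v t
      _ ≤ 2 * 2⁻¹ ^ 0 := by simpa using one_le_two
  · obtain ⟨m, hm⟩ : ∃ m, t / T = m + 1 := ⟨t / T - 1, (Nat.succ_pred_eq_of_pos h0).symm⟩
    have hle : m * T + 1 ≤ t := by
      have h1 : (t / T) * T ≤ t := Nat.div_mul_le_self t T
      have h2 : m * T + T = (t / T) * T := by rw [hm]; ring
      omega
    calc H.tailP u v t ≤ H.tailP u v (m * T + 1) := H.tailP_antitone hd u v hle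
      _ ≤ 2⁻¹ ^ m := H.tailP_pow hd hT m v
      _ = 2 * 2⁻¹ ^ (t / T) := by
          rw [hm, pow_succ', ← mul_assoc, show ((2 : ℝ≥0∞) * 2⁻¹) = 1 from
            ENNReal.mul_inv_cancel (by norm_num) (by norm_num), one_mul]

lemma pr_exists_le_sum (H : Hypergraph' V) (v : V) (t : ℕ)
    (A : V → (Fin t → Finset V × V) → Prop) :
    H.pr v t (fun w => ∃ u : V, A u w) ≤ ∑ u : V, H.pr v t (A u) := by
  unfold pr
  rw [Finset.sum_comm]
  apply Finset.sum_le_sum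
  intro w _
  by_cases h : ∃ u : V, A u w
  · obtain ⟨u0, hu0⟩ := h
    rw [if_pos ⟨u0, hu0⟩]
    calc H.trajProb v w = (if A u0 w then H.trajProb v w else 0) := by rw [if_pos hu0]
      _ ≤ ∑ u : V, (if A u w then H.trajProb v w else 0) :=
          Finset.single_le_sum (f := fun u => if A u w then H.trajProb v w else 0)
            (fun _ _ => zero_le) (Finset.mem_univ u0)
  · rw [if_neg h]
    exact zero_le

lemma radioHitting_eq_tsum_tailP (H : Hypergraph' V) {u x : V} (h : u ≠ x) :
    H.radioHitting x u = ∑' t : ℕ, H.tailP u x t := by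
  unfold radioHitting tailP
  exact tsum_congr fun t => H.pr_congr x t fun w => by simp [h]

lemma one_le_radioHitting (H : Hypergraph' V) {u v : V} (h : u ≠ v) :
    1 ≤ H.radioHitting v u := by
  have h0 : (1 : ℝ≥0∞) ≤ H.pr v 0 (fun w => u ≠ v ∧ ∀ s : Fin 0, u ∉ (w s).1) := by
    rw [pr_zero, if_pos ⟨h, fun s => s.elim0⟩]
  exact le_trans h0 (ENNReal.le_tsum 0)

lemma markov_tailP (H : Hypergraph' V) (hd : ∀ x : V, 0 < H.degV x) {u x : V}
    (hux : u ≠ x) (T : ℕ) :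
    (T : ℝ≥0∞) * H.tailP u x T ≤ H.radioHitting x u := by
  rw [H.radioHitting_eq_tsum_tailP hux]
  calc (T : ℝ≥0∞) * H.tailP u x T
      = ∑ t ∈ Finset.range T, H.tailP u x T := by
        rw [Finset.sum_const, Finset.card_range, nsmul_eq_mul]
    _ ≤ ∑ t ∈ Finset.range T, H.tailP u x t := by
        apply Finset.sum_le_sum
        intro t ht
        exact H.tailP_antitone hd u x (le_of_lt (Finset.mem_range.mp ht))
    _ ≤ ∑' t : ℕ, H.tailP u x t := ENNReal.sum_le_tsum _

end Hypergraph'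

set_option maxHeartbeats 1000000 in
/-- Matthews' bound for the radio cover time. There is a universal
constant `c > 0` such that for every connected hypergraph on `n ≥ 2` vertices,
`C̃ ≤ c · h̃_max · log n`. -/
theorem radioCover_le_maxRadioHitting_mul_log :
    ∃ c : ℝ, 0 < c ∧
      ∀ (V : Type) [Fintype V] [DecidableEq V] (H : Hypergraph' V),
        H.Connected → 2 ≤ Fintype.card V →
        H.radioCoverTime ≤
          ENNReal.ofReal c * H.maxRadioHitting *
            ENNReal.ofReal (Real.log (Fintype.card V)) := by
  refine ⟨36, by norm_num, ?_⟩
  intro V _ _ H hconn hn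
  obtain ⟨n, hnn⟩ : ∃ n, Fintype.card V = n := ⟨_, rfl⟩
  rw [hnn] at hn ⊢
  have hd : ∀ x : V, 0 < H.degV x := by
    intro x
    obtain ⟨e, he, hxe⟩ := hconn.1 x
    exact Finset.card_pos.mpr ⟨e, Finset.mem_filter.mpr ⟨he, hxe⟩⟩
  have hn1 : (1 : ℝ) < n := by exact_mod_cast lt_of_lt_of_le (one_lt_two) (hn : 2 ≤ n)
  have hlogn : 0 < Real.log n := Real.log_pos hn1
  by_cases hfin : H.maxRadioHitting = ⊤
  · rw [hfin, ENNReal.mul_top (by simp), ENNReal.top_mul (by simp [hlogn])]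
    exact le_top
  -- the max radio hitting time is at least 1
  have hm1 : 1 ≤ H.maxRadioHitting := by
    obtain ⟨a, b, hab⟩ := Fintype.exists_pair_of_one_lt_card (α := V) (by rw [hnn]; omega)
    calc (1 : ℝ≥0∞) ≤ H.radioHitting b a := H.one_le_radioHitting hab
      _ ≤ ⨆ u : V, H.radioHitting b u := le_iSup _ a
      _ ≤ H.maxRadioHitting := le_iSup (fun v => ⨆ u : V, H.radioHitting v u) b
  obtain ⟨r, hr⟩ : ∃ r : ℝ, H.maxRadioHitting.toReal = r := ⟨_, rfl⟩
  have hofr : ENNReal.ofReal r = H.maxRadioHitting := hr ▸ ENNReal.ofReal_toReal hfin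
  have hr1 : (1 : ℝ) ≤ r := by
    have := ENNReal.toReal_mono hfin hm1
    simpa [hr] using this
  obtain ⟨T, hT⟩ : ∃ T : ℕ, (⌈(2 * r)⌉₊ : ℕ) = T := ⟨_, rfl⟩
  have hT2r : 2 * r ≤ (T : ℝ) := hT ▸ Nat.le_ceil _
  have hT1 : 1 ≤ T := by
    have : (1 : ℝ) ≤ T := by linarith
    exact_mod_cast this
  have hT3r : (T : ℝ) ≤ 3 * r := by
    have h := (Nat.ceil_lt_add_one (by linarith : (0:ℝ) ≤ 2 * r)).le
    rw [hT] at h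
    linarith
  -- the Markov inequality step : after T steps the tail probability is ≤ 1/2
  have hhalf : ∀ u x : V, x ≠ u → H.tailP u x T ≤ 2⁻¹ := by
    intro u x hxu
    have h1 : (T : ℝ≥0∞) * H.tailP u x T ≤ H.maxRadioHitting := by
      refine le_trans (H.markov_tailP hd (Ne.symm hxu) T) ?_
      exact le_trans (le_iSup _ u) (le_iSup (fun v => ⨆ u : V, H.radioHitting v u) x)
    have h2 : (2 : ℝ≥0∞) * H.maxRadioHitting ≤ (T : ℝ≥0∞) := by
      rw [← hofr, ← ENNReal.ofReal_natCast, show (2:ℝ≥0∞) = ENNReal.ofReal 2 by simp,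
        ← ENNReal.ofReal_mul (by norm_num)]
      exact ENNReal.ofReal_le_ofReal hT2r
    have h3 : (T : ℝ≥0∞) * (2 * H.tailP u x T) ≤ (T : ℝ≥0∞) * 1 := by
      rw [mul_one, ← mul_assoc, mul_comm (T : ℝ≥0∞) 2, mul_assoc]
      exact le_trans (mul_le_mul_right h1 2) h2
    have hTne : (T : ℝ≥0∞) ≠ 0 := by
      simp only [ne_eq, Nat.cast_eq_zero]; omega
    have h4 : (2 : ℝ≥0∞) * H.tailP u x T ≤ 1 :=
      (ENNReal.mul_le_mul_iff_right hTne (by simp)).mp h3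
    rw [ENNReal.le_inv_iff_mul_le, mul_comm]
    exact h4
  -- decay of the tail probabilities
  have hdecay : ∀ (u v : V) (t : ℕ), H.tailP u v t ≤ 2 * 2⁻¹ ^ (t / T) :=
    fun u v t => H.tailP_decay hd hT1 (hhalf u) t v
  obtain ⟨K, hK⟩ : ∃ K : ℕ, Nat.clog 2 (2 * n) = K := ⟨_, rfl⟩
  -- the cover-time bound
  have hcov : H.radioCoverTime ≤ (T : ℝ≥0∞) * ((K : ℝ≥0∞) + 2) := by
    apply iSup_le
    intro v
    have hG : ∀ t : ℕ,
        H.pr v t (fun w => ∃ u : V, u ≠ v ∧ ∀ s : Fin t, u ∉ (w s).1) ≤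
          min 1 ((n : ℝ≥0∞) * (2 * 2⁻¹ ^ (t / T))) := by
      intro t
      refine le_min (H.pr_le_one hd v t _) ?_
      calc H.pr v t (fun w => ∃ u : V, u ≠ v ∧ ∀ s : Fin t, u ∉ (w s).1)
          ≤ ∑ u : V, H.pr v t (fun w => u ≠ v ∧ ∀ s : Fin t, u ∉ (w s).1) :=
            H.pr_exists_le_sum v t _
        _ ≤ ∑ u : V, H.tailP u v t :=
            Finset.sum_le_sum fun u _ => H.pr_mono v t fun w hw => hw.2
        _ ≤ ∑ _u : V, 2 * 2⁻¹ ^ (t / T) :=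
            Finset.sum_le_sum fun u _ => hdecay u v t
        _ = (n : ℝ≥0∞) * (2 * 2⁻¹ ^ (t / T)) := by
            rw [Finset.sum_const, nsmul_eq_mul, Finset.card_univ, hnn]
    haveI : NeZero T := ⟨by omega⟩
    calc H.radioCoverFrom v
        ≤ ∑' t : ℕ, min 1 ((n : ℝ≥0∞) * (2 * 2⁻¹ ^ (t / T))) :=
          ENNReal.tsum_le_tsum fun t => hG t
      _ = ∑' x : ℕ × Fin T, min 1 ((n : ℝ≥0∞) * (2 * 2⁻¹ ^ (((Nat.divModEquiv T).symm x) / T))) :=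
          (Equiv.tsum_eq (Nat.divModEquiv T).symm
            (fun t => min 1 ((n : ℝ≥0∞) * (2 * 2⁻¹ ^ (t / T))))).symm
      _ = ∑' x : ℕ × Fin T, min 1 ((n : ℝ≥0∞) * (2 * 2⁻¹ ^ x.1)) := by
          apply tsum_congr; intro x
          have hx : ((Nat.divModEquiv T).symm x) / T = x.1 := by
            show (x.1 * T + (x.2 : ℕ)) / T = x.1
            rw [Nat.add_comm, Nat.add_mul_div_right _ _ (by omega : 0 < T),
              Nat.div_eq_of_lt x.2.isLt, Nat.zero_add]
          rw [hx]
      _ = ∑' k : ℕ, ∑' _j : Fin T, min 1 ((n : ℝ≥0∞) * (2 * 2⁻¹ ^ k)) :=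
          ENNReal.tsum_prod (f := fun k (_ : Fin T) => min 1 ((n : ℝ≥0∞) * (2 * 2⁻¹ ^ k)))
      _ = (T : ℝ≥0∞) * ∑' k : ℕ, min 1 ((n : ℝ≥0∞) * (2 * 2⁻¹ ^ k)) := by
          have h1 : ∀ k : ℕ, (∑' _j : Fin T, min 1 ((n : ℝ≥0∞) * (2 * 2⁻¹ ^ k)))
              = (T : ℝ≥0∞) * min 1 ((n : ℝ≥0∞) * (2 * 2⁻¹ ^ k)) := by
            intro k
            rw [tsum_fintype, Finset.sum_const, Finset.card_univ, Fintype.card_fin,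
              nsmul_eq_mul]
          rw [tsum_congr h1, ENNReal.tsum_mul_left]
      _ ≤ (T : ℝ≥0∞) * ((K : ℝ≥0∞) + 2) := by
          apply mul_le_mul_right
          have hsplit : (∑ k ∈ Finset.range K, min 1 ((n : ℝ≥0∞) * (2 * 2⁻¹ ^ k)))
              + ∑' j : ℕ, min 1 ((n : ℝ≥0∞) * (2 * 2⁻¹ ^ (j + K)))
              = ∑' k : ℕ, min 1 ((n : ℝ≥0∞) * (2 * 2⁻¹ ^ k)) :=
            ENNReal.summable.sum_add_tsum_nat_add'
          rw [← hsplit]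
          have hKpow : (2 * n : ℝ≥0∞) * 2⁻¹ ^ K ≤ 1 := by
            have h2n : ((2 * n : ℕ) : ℝ≥0∞) ≤ (2 : ℝ≥0∞) ^ K := by
              have h := Nat.le_pow_clog (by norm_num : 1 < 2) (2 * n)
              rw [hK] at h
              exact_mod_cast h
            calc (2 * n : ℝ≥0∞) * 2⁻¹ ^ K ≤ (2 : ℝ≥0∞) ^ K * 2⁻¹ ^ K := by
                  apply mul_le_mul_left
                  exact_mod_cast h2n
              _ = 1 := by
                  rw [← mul_pow, ENNReal.mul_inv_cancel (by norm_num) (by norm_num), one_pow]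
          have hhead : (∑ k ∈ Finset.range K, min 1 ((n : ℝ≥0∞) * (2 * 2⁻¹ ^ k))) ≤ K := by
            calc (∑ k ∈ Finset.range K, min 1 ((n : ℝ≥0∞) * (2 * 2⁻¹ ^ k)))
                ≤ ∑ k ∈ Finset.range K, 1 := Finset.sum_le_sum fun k _ => min_le_left _ _
              _ = K := by simp
          have htail : (∑' j : ℕ, min 1 ((n : ℝ≥0∞) * (2 * 2⁻¹ ^ (j + K)))) ≤ 2 := by
            calc (∑' j : ℕ, min 1 ((n : ℝ≥0∞) * (2 * 2⁻¹ ^ (j + K))))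
                ≤ ∑' j : ℕ, 2⁻¹ ^ j := by
                  apply ENNReal.tsum_le_tsum
                  intro j
                  refine le_trans (min_le_right _ _) ?_
                  rw [pow_add]
                  calc (n : ℝ≥0∞) * (2 * (2⁻¹ ^ j * 2⁻¹ ^ K))
                      = ((2 * n : ℝ≥0∞) * 2⁻¹ ^ K) * 2⁻¹ ^ j := by ring
                    _ ≤ 1 * 2⁻¹ ^ j := mul_le_mul_left hKpow _
                    _ = 2⁻¹ ^ j := one_mul _
              _ = (1 - 2⁻¹)⁻¹ := ENNReal.tsum_geometric 2⁻¹
              _ = 2 := by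
                  rw [ENNReal.one_sub_inv_two, inv_inv]
          exact add_le_add hhead htail
  refine le_trans hcov ?_
  -- final arithmetic
  have hKreal : (K : ℝ) + 2 ≤ 12 * Real.log n := by
    have hK1 : 1 ≤ K := hK ▸ Nat.clog_pos (by norm_num) (by omega)
    have h2K : (2 : ℕ) ^ (K - 1) < 2 * n := by
      have := Nat.pow_pred_clog_lt_self (by norm_num : 1 < 2) (by omega : 1 < 2 * n)
      simpa [hK, Nat.pred_eq_sub_one] using this
    have hlogK : ((K : ℝ) - 1) * Real.log 2 ≤ Real.log 2 + Real.log n := by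
      have hcast : ((2 : ℝ)) ^ (K - 1) < 2 * n := by exact_mod_cast h2K
      have hlt : Real.log ((2:ℝ) ^ (K - 1)) ≤ Real.log (2 * n) :=
        Real.log_le_log (by positivity) hcast.le
      rw [Real.log_pow, Real.log_mul (by norm_num) (by positivity)] at hlt
      calc ((K : ℝ) - 1) * Real.log 2 = ((K - 1 : ℕ) : ℝ) * Real.log 2 := by
            rw [Nat.cast_sub hK1]; norm_num
        _ ≤ Real.log 2 + Real.log n := hlt
    have hlog2a : (0.6931471803 : ℝ) < Real.log 2 := Real.log_two_gt_d9
    have hlog2b : Real.log 2 ≤ Real.log n := Real.log_le_log (by norm_num) (by exact_mod_cast hn)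
    nlinarith [mul_pos hlogn (Real.log_pos (by norm_num : (1:ℝ) < 2)),
      mul_le_mul_of_nonneg_left hlog2b (by positivity : (0:ℝ) ≤ (K:ℝ) + 2)]
  calc (T : ℝ≥0∞) * ((K : ℝ≥0∞) + 2)
      ≤ ENNReal.ofReal (3 * r) * ENNReal.ofReal (12 * Real.log n) := by
        apply mul_le_mul'
        · rw [← ENNReal.ofReal_natCast]
          exact ENNReal.ofReal_le_ofReal hT3r
        · have : ((K : ℝ≥0∞) + 2) = ENNReal.ofReal ((K : ℝ) + 2) := by
            rw [ENNReal.ofReal_add (by positivity) (by norm_num), ENNReal.ofReal_natCast]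
            norm_num
          rw [this]
          exact ENNReal.ofReal_le_ofReal hKreal
    _ = ENNReal.ofReal 36 * H.maxRadioHitting * ENNReal.ofReal (Real.log n) := by
        rw [← hofr, ← ENNReal.ofReal_mul (by linarith : (0:ℝ) ≤ 3 * r),
          ← ENNReal.ofReal_mul (by norm_num : (0:ℝ) ≤ 36),
          ← ENNReal.ofReal_mul (by nlinarith : (0:ℝ) ≤ 36 * r)]
        congr 1
        ring
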